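/- The condition '(a,A) dancing (b,B)', i.e. (aᵀAa)(bᵀBb) − (aᵀBa)(bᵀAb) = 0, is not equivalent to the collinearity condition (aᵀAa)(bᵀBb) − (aᵀBb)(bᵀAa) = 0: there exist symmetric invertible 3×3 matrices A, B and vectors a, b ∈ ℝ³ with aᵀAa ≠ 0, bᵀBb ≠ 0 such that the first expression vanishes but the second does not. -/

import Mathlib

open Matrix

/-- The dancing condition `(aᵀAa)(bᵀBb) − (aᵀBa)(bᵀAb) = 0` is not equivalent to
the collinearity condition `(aᵀAa)(bᵀBb) − (aᵀBb)(bᵀAa) = 0`. -/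
theorem dancing_ne_collinear :
    ∃ (A B : Matrix (Fin 3) (Fin 3) ℝ) (a b : Fin 3 → ℝ),
      A.IsSymm ∧ B.IsSymm ∧ IsUnit A.det ∧ IsUnit B.det ∧
      a ≠ 0 ∧ b ≠ 0 ∧
      a ⬝ᵥ A *ᵥ a ≠ 0 ∧ b ⬝ᵥ B *ᵥ b ≠ 0 ∧
      (a ⬝ᵥ A *ᵥ a) * (b ⬝ᵥ B *ᵥ b) - (a ⬝ᵥ B *ᵥ a) * (b ⬝ᵥ A *ᵥ b) = 0 ∧
      (a ⬝ᵥ A *ᵥ a) * (b ⬝ᵥ B *ᵥ b) - (a ⬝ᵥ B *ᵥ b) * (b ⬝ᵥ A *ᵥ a) ≠ 0 := by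
  refine ⟨!![1,0,0;0,1,0;0,0,1], !![2,1,0;1,2,0;0,0,1], ![1,0,0], ![0,1,0],
    ?_, ?_, ?_, ?_, ?_, ?_, ?_, ?_, ?_, ?_⟩
  · ext i j; fin_cases i <;> fin_cases j <;> simp [Matrix.IsSymm, Matrix.transpose, Matrix.vecHead, Matrix.vecTail]
  · ext i j; fin_cases i <;> fin_cases j <;> simp [Matrix.IsSymm, Matrix.transpose, Matrix.vecHead, Matrix.vecTail]
  · simp [Matrix.det_fin_three]
  · rw [Matrix.det_fin_three]; simp; norm_num
  · intro h; have := congrFun h 0; norm_num at this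
  · intro h; have := congrFun h 1; norm_num at this
  · simp [Matrix.mulVec, dotProduct, Fin.sum_univ_three]
  · simp [Matrix.mulVec, dotProduct, Fin.sum_univ_three]
  · simp [Matrix.mulVec, dotProduct, Fin.sum_univ_three]
  · simp [Matrix.mulVec, dotProduct, Fin.sum_univ_three]
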